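/- Let m ≥ 1 be an integer. Let v : ℝ × ℤ → ℂ be differentiable in the time variable, with v(t,n) ≠ 0 for all t, n, and satisfy the potential Bogoyavlensky lattice ∂_t v(t,n) = v(t,n)·Σ_{s=0}^{m} v(t,n+m−s)/v(t,n−s) for all t and n. Then the function u(t,n) := v(t,n+m)/v(t,n) satisfies the Bogoyavlensky lattice ∂_t u(t,n) = u(t,n)·(Σ_{s=1}^{m} u(t,n+s) − Σ_{s=1}^{m} u(t,n−s)) for all t and n. -/

import Mathlib

/-- The substitution `u = v_m / v` maps solutions of the potential Bogoyavlensky lattice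
`∂_t v = v (v_m/v + v_{m-1}/v_{-1} + ⋯ + v/v_{-m})` into solutions of the
Bogoyavlensky lattice. -/
theorem potential_to_bogoyavlensky
    (m : ℕ) (hm : 1 ≤ m)
    (v : ℝ → ℤ → ℂ) (hv0 : ∀ (t : ℝ) (n : ℤ), v t n ≠ 0)
    (hv : ∀ (t : ℝ) (n : ℤ),
      HasDerivAt (fun τ => v τ n)
        (v t n * ∑ s ∈ Finset.range (m + 1), v t (n + m - s) / v t (n - s)) t)
    (u : ℝ → ℤ → ℂ)
    (hu : ∀ (t : ℝ) (n : ℤ), u t n = v t (n + m) / v t n) :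
    ∀ (t : ℝ) (n : ℤ),
      HasDerivAt (fun τ => u τ n)
        (u t n *
          ((∑ s ∈ Finset.range m, u t (n + s + 1)) -
            ∑ s ∈ Finset.range m, u t (n - s - 1))) t := by
  intro t n
  have key := (hv t (n + m)).div (hv t n) (hv0 t n)
  have hfun : (fun τ => u τ n) = fun τ => v τ (n + m) / v τ n := funext fun τ => hu τ n
  rw [hfun]
  convert key using 1
  case e'_4 => rfl
  case e'_8 => rfl
  set A := ∑ s ∈ Finset.range (m + 1), v t (n + m + m - s) / v t (n + m - s) with hAdef
  set B := ∑ s ∈ Finset.range (m + 1), v t (n + m - s) / v t (n - s) with hBdef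
  have hA : A = ∑ s ∈ Finset.range (m + 1), u t (n + m - s) := by
    refine Finset.sum_congr rfl fun s _ => ?_
    rw [hu t (n + m - s)]
    congr 2
    ring
  have hB : B = ∑ s ∈ Finset.range (m + 1), u t (n - s) := by
    refine Finset.sum_congr rfl fun s _ => ?_
    rw [hu t (n - s)]
    congr 2
    ring
  have hrefl : ∑ s ∈ Finset.range (m + 1), u t (n + m - s)
      = ∑ s ∈ Finset.range (m + 1), u t (n + s) := by
    rw [← Finset.sum_range_reflect (fun s => u t (n + s)) (m + 1)]
    refine Finset.sum_congr rfl fun s hs => ?_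
    have hsle : s ≤ m := Nat.lt_succ_iff.mp (Finset.mem_range.mp hs)
    simp only [Nat.add_sub_cancel]
    congr 1
    push_cast [Nat.cast_sub hsle]
    ring
  have hA' : A = u t n + ∑ s ∈ Finset.range m, u t (n + s + 1) := by
    rw [hA, hrefl, Finset.sum_range_succ' (fun s => u t (n + s))]
    simp only [Nat.cast_zero, add_zero, Nat.cast_add, Nat.cast_one]
    rw [add_comm]
    congr 1
    refine Finset.sum_congr rfl fun s _ => ?_
    congr 1
    push_cast
    ring
  have hB' : B = u t n + ∑ s ∈ Finset.range m, u t (n - s - 1) := by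
    rw [hB, Finset.sum_range_succ' (fun s => u t (n - s))]
    simp only [Nat.cast_zero, sub_zero, Nat.cast_add, Nat.cast_one]
    rw [add_comm]
    congr 1
    refine Finset.sum_congr rfl fun s _ => ?_
    congr 1
    push_cast
    ring
  have hAB : (∑ s ∈ Finset.range m, u t (n + s + 1)) - ∑ s ∈ Finset.range m, u t (n - s - 1)
      = A - B := by rw [hA', hB']; ring
  rw [hu t n, hAB]
  have h0 := hv0 t n
  field_simp
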